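/- For the ferromagnetic q-state Potts model (q ≥ 2, β > 0) on the subgraph induced by a finite d-dimensional cube V ⊂ ℤ^d, and for the collection D = {B_1,…,B_m} of tilings of V, the spectral gap of the isolated-vertices dynamics is at least that of the isolated-vertices tiled dynamics: λ(I_SW) ≥ λ(I_D). -/

import Mathlib

open scoped BigOperators

attribute [local instance] Classical.propDecidable

/-- Vertices of the `d`-dimensional integer lattice `ℤ^d`. -/
abbrev Vtx (d : ℕ) := Fin d → ℤ

/-- Graph (ℓ¹) distance on `ℤ^d`. -/
def latDist {d : ℕ} (u v : Vtx d) : ℕ := ∑ i, (u i - v i).natAbs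

/-- Nearest-neighbor adjacency on `ℤ^d`. -/
def latAdj {d : ℕ} (u v : Vtx d) : Prop := latDist u v = 1

/-- `V` is a `d`-dimensional cube (axis-aligned box with equal sides) in `ℤ^d`. -/
def IsCube {d : ℕ} (V : Finset (Vtx d)) : Prop :=
  ∃ (x : Vtx d) (s : ℕ), ∀ y : Vtx d, y ∈ V ↔ ∀ i, x i ≤ y i ∧ y i < x i + (s : ℤ)

/-- Spin configurations on `V` with spin set `{1,…,q}`. -/
abbrev Conf {d : ℕ} (V : Finset (Vtx d)) (q : ℕ) := {x // x ∈ V} → Fin q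

/-- Unnormalized Potts weight: `exp(β · #{monochromatic edges of σ})`. -/
noncomputable def pottsWeight {d : ℕ} {V : Finset (Vtx d)} (q : ℕ) (β : ℝ)
    (σ : Conf V q) : ℝ :=
  Real.exp (β * ((∑ u : {x // x ∈ V}, ∑ v : {x // x ∈ V},
    if latAdj u.1 v.1 ∧ σ u = σ v then (1 : ℝ) else 0) / 2))

/-- The ferromagnetic `q`-state Potts measure on the subgraph of `ℤ^d` induced by `V`
(with free boundary): `π(σ) ∝ exp(β·|{e ∈ E : σ monochromatic on e}|)`. -/
noncomputable def potts {d : ℕ} (q : ℕ) (β : ℝ) (V : Finset (Vtx d)) : Conf V q → ℝ :=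
  fun σ => pottsWeight q β σ / ∑ σ' : Conf V q, pottsWeight q β σ'

/-- The set `E(σ)` of monochromatic edges of the configuration `σ`. -/
noncomputable def monoEdges {d : ℕ} {V : Finset (Vtx d)} {q : ℕ} (σ : Conf V q) :
    Finset (Sym2 {x // x ∈ V}) :=
  Finset.univ.filter fun e =>
    ∃ u v : {x // x ∈ V}, e = s(u, v) ∧ latAdj u.1 v.1 ∧ σ u = σ v

/-- The graph on `V` with edge set `A`. -/
def graphOf {d : ℕ} {V : Finset (Vtx d)} (A : Finset (Sym2 {x // x ∈ V})) :
    SimpleGraph {x // x ∈ V} where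
  Adj u v := u ≠ v ∧ s(u, v) ∈ A
  symm := by
    constructor
    intro u v h
    exact ⟨h.1.symm, by rw [Sym2.eq_swap]; exact h.2⟩
  loopless := by constructor; intro u h; exact h.1 rfl

/-- `c(A)`: the number of connected components of `(V, A)`. -/
noncomputable def compCount {d : ℕ} {V : Finset (Vtx d)}
    (A : Finset (Sym2 {x // x ∈ V})) : ℕ :=
  Nat.card (graphOf A).ConnectedComponent

/-- The isolated vertices of `(V, A)`. -/
noncomputable def isoVerts {d : ℕ} {V : Finset (Vtx d)}
    (A : Finset (Sym2 {x // x ∈ V})) : Finset {x // x ∈ V} :=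
  Finset.univ.filter fun v => ∀ e ∈ A, v ∉ e

/-- The Swendsen–Wang transition matrix:
`SW(σ,σ') = Σ_{A ⊆ E(σ)∩E(σ')} p^{|A|} (1−p)^{|E(σ)∖A|} q^{−c(A)}`, `p = 1 − e^{−β}`. -/
noncomputable def SWmat {d : ℕ} (q : ℕ) (β : ℝ) (V : Finset (Vtx d)) :
    Matrix (Conf V q) (Conf V q) ℝ :=
  Matrix.of fun σ σ' =>
    ∑ A ∈ (monoEdges σ ∩ monoEdges σ').powerset,
      (1 - Real.exp (-β)) ^ A.card * Real.exp (-β) ^ ((monoEdges σ).card - A.card)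
        * ((q : ℝ) ^ compCount A)⁻¹

/-- The isolated-vertices dynamics `I_SW`: add each monochromatic edge independently with
probability `p = 1 − e^{−β}`, then resample uniformly the spins of the isolated vertices. -/
noncomputable def ISWmat {d : ℕ} (q : ℕ) (β : ℝ) (V : Finset (Vtx d)) :
    Matrix (Conf V q) (Conf V q) ℝ :=
  Matrix.of fun σ σ' =>
    ∑ A ∈ (monoEdges σ).powerset,
      (1 - Real.exp (-β)) ^ A.card * Real.exp (-β) ^ ((monoEdges σ).card - A.card) *
        (if ∀ v : {x // x ∈ V}, v ∉ isoVerts A → σ' v = σ v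
         then ((q : ℝ) ^ (isoVerts A).card)⁻¹ else 0)

/-- Variance w.r.t. `μ`. -/
noncomputable def varMu {Ω : Type*} [Fintype Ω] (μ f : Ω → ℝ) : ℝ :=
  ∑ x, (f x - ∑ y, f y * μ y) ^ 2 * μ x

/-- Inner product in `L²(μ)`. -/
noncomputable def innerMu {Ω : Type*} [Fintype Ω] (μ f g : Ω → ℝ) : ℝ :=
  ∑ x, f x * g x * μ x

/-- Dirichlet form `⟨f, (I − P) f⟩_μ`. -/
noncomputable def dirichletForm {Ω : Type*} [Fintype Ω]
    (μ : Ω → ℝ) (P : Matrix Ω Ω ℝ) (f : Ω → ℝ) : ℝ :=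
  ∑ x, f x * (f x - P.mulVec f x) * μ x

/-- Spectral gap of a reversible positive semidefinite chain, via the variational
characterization `λ(P) = min { ⟨f,(I−P)f⟩_μ / Var_μ(f) : Var_μ(f) ≠ 0 }`. -/
noncomputable def gapD {Ω : Type*} [Fintype Ω] (μ : Ω → ℝ) (P : Matrix Ω Ω ℝ) : ℝ :=
  sInf {r : ℝ | ∃ f : Ω → ℝ, varMu μ f ≠ 0 ∧ r = dirichletForm μ P f / varMu μ f}

/-- The tiling of `V` with offset `x ∈ {0,…,L+2}^d`: the union over `h ∈ ℤ^d` of the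
`d`-dimensional cubes of side length `L−1` (volume `L^d`) centered at `x + h(L+3)`,
intersected with `V`. -/
noncomputable def tile {d : ℕ} (V : Finset (Vtx d)) (L : ℕ) (x : Fin d → Fin (L + 3)) :
    Finset (Vtx d) :=
  V.filter fun y => ∃ h : Fin d → ℤ,
    ∀ i, |y i - (x i : ℤ) - h i * ((L : ℤ) + 3)| ≤ ((L : ℤ) - 1) / 2

/-- The isolated-vertices tiled dynamics `I_D`: add each monochromatic edge independently
with probability `p`, pick a tiling `B_k` uniformly at random among the `(L+3)^d` tilings,
and resample uniformly the spins of the isolated vertices lying in `B_k`. -/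
noncomputable def IDmat {d : ℕ} (q : ℕ) (β : ℝ) (V : Finset (Vtx d)) (L : ℕ) :
    Matrix (Conf V q) (Conf V q) ℝ :=
  Matrix.of fun σ σ' =>
    (((L : ℝ) + 3) ^ d)⁻¹ * ∑ x : Fin d → Fin (L + 3), ∑ A ∈ (monoEdges σ).powerset,
      (1 - Real.exp (-β)) ^ A.card * Real.exp (-β) ^ ((monoEdges σ).card - A.card) *
        (if ∀ v : {y // y ∈ V}, ¬(v ∈ isoVerts A ∧ v.1 ∈ tile V L x) → σ' v = σ v
         then ((q : ℝ) ^ ((isoVerts A).filter fun v => v.1 ∈ tile V L x).card)⁻¹ else 0)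

section Aux

set_option linter.unusedSectionVars false

variable {X : Type*} [Fintype X] [DecidableEq X] {q : ℕ}

/-- agreement off `S` -/
def agr (S : Finset X) (σ σ' : X → Fin q) : Prop := ∀ v, v ∉ S → σ' v = σ v

lemma agr_symm {S : Finset X} {σ σ' : X → Fin q} (h : agr S σ σ') : agr S σ' σ :=
  fun v hv => (h v hv).symm

lemma agr_comm {S : Finset X} {σ σ' : X → Fin q} : agr S σ σ' ↔ agr S σ' σ :=
  ⟨agr_symm, agr_symm⟩

lemma card_agr (S : Finset X) (σ : X → Fin q) :
    (Finset.univ.filter (fun σ' : X → Fin q => agr S σ σ')).card = q ^ S.card := by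
  classical
  have e : {σ' : X → Fin q // agr S σ σ'} ≃ ({v // v ∈ S} → Fin q) :=
    { toFun := fun φ v => φ.1 v.1
      invFun := fun g => ⟨fun v => if h : v ∈ S then g ⟨v, h⟩ else σ v,
        fun v hv => dif_neg hv⟩
      left_inv := by
        intro φ; ext v
        by_cases h : v ∈ S
        · simp [h]
        · simp [h, φ.2 v h]
      right_inv := by
        intro g; ext v; simp [v.2] }
  calc (Finset.univ.filter (fun σ' : X → Fin q => agr S σ σ')).card
      = Fintype.card {σ' : X → Fin q // agr S σ σ'} := by
        rw [Fintype.card_subtype]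
    _ = Fintype.card ({v // v ∈ S} → Fin q) := Fintype.card_congr e
    _ = q ^ S.card := by
        rw [Fintype.card_fun]
        simp

set_option linter.unusedSectionVars false

lemma sum_ind_agr (S : Finset X) (σ : X → Fin q) :
    (∑ σ' : X → Fin q, if agr S σ σ' then (1:ℝ) else 0) = (q:ℝ) ^ S.card := by
  rw [Finset.sum_boole, card_agr]
  push_cast
  ring

noncomputable def Gfun (S : Finset X) (g : (X → Fin q) → ℝ) (σ : X → Fin q) : ℝ :=
  ∑ σ', if agr S σ σ' then g σ' else 0

noncomputable def Bform (S : Finset X) (g : (X → Fin q) → ℝ) : ℝ :=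
  ∑ σ, ∑ σ', g σ * (if agr S σ σ' then ((q:ℝ) ^ S.card)⁻¹ else 0) * g σ'

lemma Bform_eq (S : Finset X) (g : (X → Fin q) → ℝ) :
    Bform S g = ((q:ℝ) ^ S.card)⁻¹ * ∑ σ, g σ * Gfun S g σ := by
  rw [Finset.mul_sum]
  refine Finset.sum_congr rfl fun σ _ => ?_
  rw [Gfun, Finset.mul_sum, Finset.mul_sum]
  refine Finset.sum_congr rfl fun σ' _ => ?_
  by_cases h : agr S σ σ' <;> simp [h] <;> ring

lemma Gfun_congr {S : Finset X} {σ τ : X → Fin q} (h : agr S σ τ) (g : (X → Fin q) → ℝ) :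
    Gfun S g σ = Gfun S g τ := by
  refine Finset.sum_congr rfl fun σ' _ => ?_
  have : agr S σ σ' ↔ agr S τ σ' := by
    constructor <;> intro h' v hv
    · rw [h' v hv, h v hv]
    · rw [h' v hv, ← h v hv]
  simp only [this]

lemma sum_sq_Gfun (S : Finset X) (g : (X → Fin q) → ℝ) :
    ∑ σ, (Gfun S g σ) ^ 2 = (q:ℝ) ^ S.card * ∑ σ, g σ * Gfun S g σ := by
  have h1 : ∀ σ, (Gfun S g σ) ^ 2 = ∑ σ', if agr S σ σ' then g σ' * Gfun S g σ else 0 := by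
    intro σ
    rw [sq, Gfun, Finset.sum_mul]
    refine Finset.sum_congr rfl fun σ' _ => ?_
    by_cases h : agr S σ σ' <;> simp [h]
  calc ∑ σ, (Gfun S g σ) ^ 2
      = ∑ σ, ∑ σ', if agr S σ σ' then g σ' * Gfun S g σ else 0 := by
        exact Finset.sum_congr rfl fun σ _ => h1 σ
    _ = ∑ σ', ∑ σ, if agr S σ σ' then g σ' * Gfun S g σ else 0 := Finset.sum_comm
    _ = ∑ σ', g σ' * Gfun S g σ' * ((q:ℝ) ^ S.card) := by
        refine Finset.sum_congr rfl fun σ' _ => ?_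
        have : ∀ σ, (if agr S σ σ' then g σ' * Gfun S g σ else 0)
            = g σ' * Gfun S g σ' * (if agr S σ' σ then (1:ℝ) else 0) := by
          intro σ
          by_cases h : agr S σ σ'
          · rw [if_pos h, if_pos (agr_symm h), Gfun_congr h g, mul_one]
          · rw [if_neg h, if_neg (fun h' => h (agr_symm h')), mul_zero]
        rw [Finset.sum_congr rfl fun σ _ => this σ, ← Finset.mul_sum, sum_ind_agr]
    _ = (q:ℝ) ^ S.card * ∑ σ, g σ * Gfun S g σ := by
        rw [Finset.mul_sum]; refine Finset.sum_congr rfl fun σ _ => by ring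

lemma Bform_eq_sq (hq : 0 < q) (S : Finset X) (g : (X → Fin q) → ℝ) :
    Bform S g = (((q:ℝ) ^ S.card)⁻¹) ^ 2 * ∑ σ, (Gfun S g σ) ^ 2 := by
  have hqp : (0:ℝ) < (q:ℝ) ^ S.card := by positivity
  rw [Bform_eq, sum_sq_Gfun]
  field_simp

lemma Bform_nonneg (hq : 0 < q) (S : Finset X) (g : (X → Fin q) → ℝ) :
    0 ≤ Bform S g := by
  rw [Bform_eq_sq hq]
  positivity

lemma count_trans {S S' : Finset X} (hSS : S ⊆ S') (σ σ'' : X → Fin q) :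
    (∑ σ' : X → Fin q, (if agr S' σ σ' then (1:ℝ) else 0) * (if agr S σ' σ'' then 1 else 0))
      = if agr S' σ σ'' then (q:ℝ) ^ S.card else 0 := by
  by_cases h : agr S' σ σ''
  · rw [if_pos h]
    have key : ∀ σ' : X → Fin q,
        (if agr S' σ σ' then (1:ℝ) else 0) * (if agr S σ' σ'' then 1 else 0)
          = if agr S σ'' σ' then (1:ℝ) else 0 := by
      intro σ'
      by_cases hb : agr S σ' σ''
      · have ha : agr S' σ σ' := by
          intro v hv
          rw [← hb v (fun hvS => hv (hSS hvS)), h v hv]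
        rw [if_pos ha, if_pos hb, if_pos (agr_symm hb), one_mul]
      · rw [if_neg hb, mul_zero, if_neg (fun h' => hb (agr_symm h'))]
    rw [Finset.sum_congr rfl fun σ' _ => key σ', sum_ind_agr]
  · rw [if_neg h]
    refine Finset.sum_eq_zero fun σ' _ => ?_
    by_cases ha : agr S' σ σ'
    · by_cases hb : agr S σ' σ''
      · exact absurd (fun v hv => by rw [hb v (fun hvS => hv (hSS hvS)), ha v hv]) h
      · rw [if_neg hb, mul_zero]
    · rw [if_neg ha, zero_mul]

lemma Gfun_subset {S S' : Finset X} (hSS : S ⊆ S') (g : (X → Fin q) → ℝ) (σ : X → Fin q) :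
    (q:ℝ) ^ S.card * Gfun S' g σ = ∑ σ', if agr S' σ σ' then Gfun S g σ' else 0 := by
  symm
  calc (∑ σ', if agr S' σ σ' then Gfun S g σ' else 0)
      = ∑ σ', ∑ σ'', (if agr S' σ σ' then (1:ℝ) else 0) *
          ((if agr S σ' σ'' then (1:ℝ) else 0) * g σ'') := by
        refine Finset.sum_congr rfl fun σ' _ => ?_
        by_cases h : agr S' σ σ'
        · rw [if_pos h, Gfun]
          refine Finset.sum_congr rfl fun σ'' _ => ?_
          by_cases h2 : agr S σ' σ'' <;> simp [h, h2]
        · simp [h]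
    _ = ∑ σ'', (∑ σ', (if agr S' σ σ' then (1:ℝ) else 0) * (if agr S σ' σ'' then 1 else 0))
          * g σ'' := by
        rw [Finset.sum_comm]
        refine Finset.sum_congr rfl fun σ' _ => ?_
        rw [Finset.sum_mul]
        refine Finset.sum_congr rfl fun σ'' _ => by ring
    _ = ∑ σ'', (if agr S' σ σ'' then (q:ℝ) ^ S.card else 0) * g σ'' := by
        refine Finset.sum_congr rfl fun σ'' _ => by rw [count_trans hSS]
    _ = (q:ℝ) ^ S.card * Gfun S' g σ := by
        rw [Gfun, Finset.mul_sum]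
        refine Finset.sum_congr rfl fun σ'' _ => ?_
        by_cases h : agr S' σ σ'' <;> simp [h]

lemma sum_sq_Gfun_subset (hq : 0 < q) {S S' : Finset X} (hSS : S ⊆ S') (g : (X → Fin q) → ℝ) :
    ((q:ℝ) ^ S.card) ^ 2 * ∑ σ, (Gfun S' g σ) ^ 2
      ≤ ((q:ℝ) ^ S'.card) ^ 2 * ∑ σ, (Gfun S g σ) ^ 2 := by
  have key : ∀ σ, ((q:ℝ) ^ S.card * Gfun S' g σ) ^ 2
      ≤ (q:ℝ) ^ S'.card * ∑ σ', if agr S' σ σ' then (Gfun S g σ') ^ 2 else 0 := by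
    intro σ
    rw [Gfun_subset hSS]
    have cs := Finset.sum_mul_sq_le_sq_mul_sq Finset.univ
      (fun σ' => if agr S' σ σ' then (1:ℝ) else 0)
      (fun σ' => if agr S' σ σ' then Gfun S g σ' else 0)
    have e1 : (∑ σ', (if agr S' σ σ' then (1:ℝ) else 0) *
        (if agr S' σ σ' then Gfun S g σ' else 0)) = ∑ σ', if agr S' σ σ' then Gfun S g σ' else 0 := by
      refine Finset.sum_congr rfl fun σ' _ => ?_
      by_cases h : agr S' σ σ' <;> simp [h]
    have e2 : (∑ σ', (if agr S' σ σ' then (1:ℝ) else 0) ^ 2) = (q:ℝ) ^ S'.card := by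
      rw [← sum_ind_agr S' σ]
      refine Finset.sum_congr rfl fun σ' _ => ?_
      by_cases h : agr S' σ σ' <;> simp [h]
    have e3 : (∑ σ', (if agr S' σ σ' then Gfun S g σ' else 0) ^ 2)
        = ∑ σ', if agr S' σ σ' then (Gfun S g σ') ^ 2 else 0 := by
      refine Finset.sum_congr rfl fun σ' _ => ?_
      by_cases h : agr S' σ σ' <;> simp [h]
    rw [e1, e2, e3] at cs
    exact cs
  calc ((q:ℝ) ^ S.card) ^ 2 * ∑ σ, (Gfun S' g σ) ^ 2
      = ∑ σ, ((q:ℝ) ^ S.card * Gfun S' g σ) ^ 2 := by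
        rw [Finset.mul_sum]; exact Finset.sum_congr rfl fun σ _ => by ring
    _ ≤ ∑ σ, (q:ℝ) ^ S'.card * ∑ σ', if agr S' σ σ' then (Gfun S g σ') ^ 2 else 0 :=
        Finset.sum_le_sum fun σ _ => key σ
    _ = (q:ℝ) ^ S'.card * ∑ σ', (Gfun S g σ') ^ 2 * ∑ σ, if agr S' σ' σ then (1:ℝ) else 0 := by
        rw [← Finset.mul_sum]
        congr 1
        rw [Finset.sum_comm]
        refine Finset.sum_congr rfl fun σ' _ => ?_
        rw [Finset.mul_sum]
        refine Finset.sum_congr rfl fun σ _ => ?_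
        by_cases h : agr S' σ σ'
        · rw [if_pos h, if_pos (agr_symm h), mul_one]
        · rw [if_neg h, if_neg (fun h' => h (agr_symm h')), mul_zero]
    _ = ((q:ℝ) ^ S'.card) ^ 2 * ∑ σ, (Gfun S g σ) ^ 2 := by
        rw [Finset.sum_congr rfl fun σ' _ => by rw [sum_ind_agr], ← Finset.sum_mul]
        ring

lemma Bform_mono (hq : 0 < q) {S S' : Finset X} (hSS : S ⊆ S') (g : (X → Fin q) → ℝ) :
    Bform S' g ≤ Bform S g := by
  rw [Bform_eq_sq hq, Bform_eq_sq hq]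
  have key := sum_sq_Gfun_subset hq hSS g
  rw [inv_pow, inv_pow, ← div_eq_inv_mul, ← div_eq_inv_mul,
    div_le_div_iff₀ (by positivity) (by positivity)]
  linarith [key]

lemma Bform_empty (g : (X → Fin q) → ℝ) :
    Bform (∅ : Finset X) g = ∑ σ, (g σ) ^ 2 := by
  rw [Bform]
  refine Finset.sum_congr rfl fun σ _ => ?_
  have h : ∀ σ' : X → Fin q, agr (∅ : Finset X) σ σ' ↔ σ' = σ := by
    intro σ'
    constructor
    · intro h; funext v; exact h v (Finset.notMem_empty v)
    · intro h; subst h; intro v _; rfl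
  calc (∑ σ', g σ * (if agr (∅ : Finset X) σ σ' then ((q:ℝ) ^ (∅ : Finset X).card)⁻¹ else 0) * g σ')
      = ∑ σ', if σ' = σ then g σ * g σ' else 0 := by
        refine Finset.sum_congr rfl fun σ' _ => ?_
        rw [h σ']
        by_cases h2 : σ' = σ <;> simp [h2]
    _ = g σ * g σ := by
        rw [Finset.sum_ite_eq' Finset.univ σ (fun σ' => g σ * g σ'), if_pos (Finset.mem_univ σ)]
    _ = (g σ) ^ 2 := by ring

lemma Bform_le_sum_sq (hq : 0 < q) (S : Finset X) (g : (X → Fin q) → ℝ) :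
    Bform S g ≤ ∑ σ, (g σ) ^ 2 := by
  rw [← Bform_empty g]
  exact Bform_mono hq (Finset.empty_subset S) g

end Aux

section Potts

set_option linter.unusedSectionVars false
set_option maxHeartbeats 1000000

variable {d : ℕ}

lemma latAdj_ne {u v : Vtx d} (h : latAdj u v) : u ≠ v := by
  rintro rfl
  simp [latAdj, latDist] at h

lemma latAdj_symm' {u v : Vtx d} (h : latAdj u v) : latAdj v u := by
  unfold latAdj latDist at *
  rw [Finset.sum_congr rfl fun i _ => (by rw [← Int.natAbs_neg]; ring_nf : (v i - u i).natAbs = (u i - v i).natAbs)]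
  exact h

lemma card_pairs {V : Finset (Vtx d)} {q : ℕ} (σ : Conf V q) :
    ((Finset.univ : Finset ({x // x ∈ V} × {x // x ∈ V})).filter
      fun p => latAdj p.1.1 p.2.1 ∧ σ p.1 = σ p.2).card = 2 * (monoEdges σ).card := by
  classical
  have hmapsto : ∀ p ∈ (Finset.univ : Finset ({x // x ∈ V} × {x // x ∈ V})).filter
      (fun p => latAdj p.1.1 p.2.1 ∧ σ p.1 = σ p.2), s(p.1, p.2) ∈ monoEdges σ := by
    intro p hp
    obtain ⟨-, hadj, heq⟩ := Finset.mem_filter.mp hp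
    exact Finset.mem_filter.mpr ⟨Finset.mem_univ _, p.1, p.2, rfl, hadj, heq⟩
  rw [Finset.card_eq_sum_card_fiberwise hmapsto]
  have hfib : ∀ e ∈ monoEdges σ, (Finset.filter (fun a : {x // x ∈ V} × {x // x ∈ V} => s(a.1, a.2) = e)
      (Finset.filter (fun p => latAdj p.1.1 p.2.1 ∧ σ p.1 = σ p.2) Finset.univ)).card = 2 := by
    intro e he
    obtain ⟨u, v, he', hadj, heq⟩ := (Finset.mem_filter.mp he).2
    have huv : u ≠ v := fun h => latAdj_ne hadj (congrArg Subtype.val h)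
    have hset : (Finset.filter (fun a : {x // x ∈ V} × {x // x ∈ V} => s(a.1, a.2) = e)
        (Finset.filter (fun p => latAdj p.1.1 p.2.1 ∧ σ p.1 = σ p.2) Finset.univ))
        = {(u, v), (v, u)} := by
      ext p
      simp only [Finset.mem_filter, Finset.mem_univ, true_and, Finset.mem_insert,
        Finset.mem_singleton]
      constructor
      · rintro ⟨⟨hadj', heq'⟩, hs⟩
        rw [he'] at hs
        rcases Sym2.eq_iff.mp hs with ⟨h1, h2⟩ | ⟨h1, h2⟩
        · exact Or.inl (Prod.ext h1 h2)
        · exact Or.inr (Prod.ext h1 h2)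
      · rintro (rfl | rfl)
        · exact ⟨⟨hadj, heq⟩, he'.symm⟩
        · refine ⟨⟨latAdj_symm' hadj, heq.symm⟩, ?_⟩
          rw [he']
          exact Sym2.eq_swap
    rw [hset, Finset.card_insert_of_notMem, Finset.card_singleton]
    intro hmem
    rw [Finset.mem_singleton] at hmem
    exact huv (congrArg Prod.fst hmem)
  rw [Finset.sum_congr rfl hfib, Finset.sum_const, smul_eq_mul, mul_comm]

lemma pottsWeight_eq {V : Finset (Vtx d)} {q : ℕ} (β : ℝ) (σ : Conf V q) :
    pottsWeight q β σ = Real.exp β ^ (monoEdges σ).card := by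
  rw [pottsWeight]
  have h : (∑ u : {x // x ∈ V}, ∑ v : {x // x ∈ V},
      if latAdj u.1 v.1 ∧ σ u = σ v then (1 : ℝ) else 0)
      = 2 * ((monoEdges σ).card : ℝ) := by
    rw [← Finset.sum_product', Finset.univ_product_univ, Finset.sum_boole, card_pairs σ]
    push_cast
    ring
  rw [h, ← Real.exp_nat_mul]
  congr 1
  ring

/-- worker sub-lemma for the Edwards–Sokal weight identity -/
lemma nu_eq {V : Finset (Vtx d)} {q : ℕ} (β : ℝ) {σ : Conf V q}
    {A : Finset (Sym2 {x // x ∈ V})} (hA : A ⊆ monoEdges σ) :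
    potts q β V σ *
      ((1 - Real.exp (-β)) ^ A.card * Real.exp (-β) ^ ((monoEdges σ).card - A.card))
      = (∑ σ' : Conf V q, pottsWeight q β σ')⁻¹ * (Real.exp β - 1) ^ A.card := by
  have ham : A.card ≤ (monoEdges σ).card := Finset.card_le_card hA
  have hz : Real.exp β ≠ 0 := (Real.exp_pos β).ne'
  rw [potts, pottsWeight_eq, Real.exp_neg, div_eq_mul_inv]
  have key : Real.exp β ^ (monoEdges σ).card *
      ((Real.exp β)⁻¹) ^ ((monoEdges σ).card - A.card) = Real.exp β ^ A.card := by
    rw [inv_pow]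
    nth_rewrite 1 [← Nat.add_sub_cancel' ham]
    rw [pow_add, mul_assoc, mul_inv_cancel₀ (pow_ne_zero _ hz), mul_one]
  calc Real.exp β ^ (monoEdges σ).card * (∑ σ' : Conf V q, pottsWeight q β σ')⁻¹ *
        ((1 - (Real.exp β)⁻¹) ^ A.card * ((Real.exp β)⁻¹) ^ ((monoEdges σ).card - A.card))
      = (∑ σ' : Conf V q, pottsWeight q β σ')⁻¹ * ((1 - (Real.exp β)⁻¹) ^ A.card *
          (Real.exp β ^ (monoEdges σ).card * ((Real.exp β)⁻¹) ^ ((monoEdges σ).card - A.card))) := by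
        ring
    _ = (∑ σ' : Conf V q, pottsWeight q β σ')⁻¹ *
          ((1 - (Real.exp β)⁻¹) ^ A.card * Real.exp β ^ A.card) := by rw [key]
    _ = (∑ σ' : Conf V q, pottsWeight q β σ')⁻¹ * (Real.exp β - 1) ^ A.card := by
        rw [← mul_pow]
        congr 2
        rw [sub_mul, one_mul, inv_mul_cancel₀ hz]

lemma sum_w_one {V : Finset (Vtx d)} (β : ℝ) (E : Finset (Sym2 {x // x ∈ V})) :
    ∑ A ∈ E.powerset, (1 - Real.exp (-β)) ^ A.card * Real.exp (-β) ^ (E.card - A.card) = 1 := by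
  classical
  calc ∑ A ∈ E.powerset, (1 - Real.exp (-β)) ^ A.card * Real.exp (-β) ^ (E.card - A.card)
      = ∑ A ∈ E.powerset, (∏ _e ∈ A, (1 - Real.exp (-β))) * ∏ _e ∈ E \ A, Real.exp (-β) := by
        refine Finset.sum_congr rfl fun A hA => ?_
        rw [Finset.prod_const, Finset.prod_const,
          Finset.card_sdiff_of_subset (Finset.mem_powerset.mp hA)]
    _ = ∏ _e ∈ E, ((1 - Real.exp (-β)) + Real.exp (-β)) :=
        (Finset.prod_add _ _ E).symm
    _ = 1 := by simp

lemma mono_subset_agr {V : Finset (Vtx d)} {q : ℕ} {A : Finset (Sym2 {x // x ∈ V})}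
    {S : Finset {x // x ∈ V}} (hS : S ⊆ isoVerts A) {σ σ' : Conf V q}
    (hag : agr S σ σ') (hA : A ⊆ monoEdges σ) : A ⊆ monoEdges σ' := by
  intro e heA
  obtain ⟨u, v, he, hadj, heq⟩ := (Finset.mem_filter.mp (hA heA)).2
  have hu : u ∉ S := fun huS => by
    have h2 := (Finset.mem_filter.mp (hS huS)).2
    exact h2 e heA (by rw [he]; exact Sym2.mem_mk_left u v)
  have hv : v ∉ S := fun hvS => by
    have h2 := (Finset.mem_filter.mp (hS hvS)).2
    exact h2 e heA (by rw [he]; exact Sym2.mem_mk_right u v)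
  refine Finset.mem_filter.mpr ⟨Finset.mem_univ _, u, v, he, hadj, ?_⟩
  rw [hag u hu, hag v hv, heq]

noncomputable def gA {V : Finset (Vtx d)} {q : ℕ} (f : Conf V q → ℝ)
    (A : Finset (Sym2 {x // x ∈ V})) (σ : Conf V q) : ℝ :=
  if A ⊆ monoEdges σ then f σ else 0

noncomputable def Qform {Ω : Type*} [Fintype Ω] (μ : Ω → ℝ) (P : Matrix Ω Ω ℝ)
    (f : Ω → ℝ) : ℝ :=
  ∑ σ, ∑ σ', f σ * P σ σ' * f σ' * μ σ

lemma dirichletForm_eq {Ω : Type*} [Fintype Ω] (μ : Ω → ℝ) (P : Matrix Ω Ω ℝ)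
    (f : Ω → ℝ) :
    dirichletForm μ P f = (∑ σ, f σ ^ 2 * μ σ) - Qform μ P f := by
  rw [dirichletForm, Qform, ← Finset.sum_sub_distrib]
  refine Finset.sum_congr rfl fun σ _ => ?_
  simp only [Matrix.mulVec, dotProduct]
  rw [mul_sub, sub_mul]
  congr 1
  · ring
  · rw [Finset.mul_sum, Finset.sum_mul]
    refine Finset.sum_congr rfl fun σ' _ => by ring

noncomputable def wgt {V : Finset (Vtx d)} {q : ℕ} (β : ℝ) (σ : Conf V q)
    (A : Finset (Sym2 {x // x ∈ V})) : ℝ :=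
  (1 - Real.exp (-β)) ^ A.card * Real.exp (-β) ^ ((monoEdges σ).card - A.card)

noncomputable def tileIso {V : Finset (Vtx d)} (L : ℕ) (A : Finset (Sym2 {x // x ∈ V}))
    (x : Fin d → Fin (L + 3)) : Finset {x // x ∈ V} :=
  (isoVerts A).filter fun v => v.1 ∈ tile V L x

lemma ISWmat_apply {V : Finset (Vtx d)} {q : ℕ} (β : ℝ) (σ σ' : Conf V q) :
    ISWmat q β V σ σ' = ∑ A ∈ (monoEdges σ).powerset,
      wgt β σ A * (if agr (isoVerts A) σ σ' then ((q : ℝ) ^ (isoVerts A).card)⁻¹ else 0) := by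
  show ∑ A ∈ (monoEdges σ).powerset, _ = _
  refine Finset.sum_congr rfl fun A _ => ?_
  have hif : (if (∀ v ∉ isoVerts A, σ' v = σ v) then ((q : ℝ) ^ (isoVerts A).card)⁻¹ else (0:ℝ))
      = (if agr (isoVerts A) σ σ' then ((q : ℝ) ^ (isoVerts A).card)⁻¹ else 0) :=
    if_congr Iff.rfl rfl rfl
  rw [mul_assoc, hif, wgt, mul_assoc]

lemma IDmat_apply {V : Finset (Vtx d)} {q L : ℕ} (β : ℝ) (σ σ' : Conf V q) :
    IDmat q β V L σ σ' = (((L : ℝ) + 3) ^ d)⁻¹ * ∑ x : Fin d → Fin (L + 3),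
      ∑ A ∈ (monoEdges σ).powerset,
        wgt β σ A * (if agr (tileIso L A x) σ σ' then ((q : ℝ) ^ (tileIso L A x).card)⁻¹ else 0) := by
  show (((L : ℝ) + 3) ^ d)⁻¹ * _ = _
  congr 1
  refine Finset.sum_congr rfl fun x _ => Finset.sum_congr rfl fun A _ => ?_
  congr 1
  refine if_congr ?_ rfl rfl
  constructor
  · intro h v hv
    exact h v fun hc => hv (Finset.mem_filter.mpr ⟨hc.1, hc.2⟩)
  · intro h v hv
    exact h v fun hc => hv ⟨(Finset.mem_filter.mp hc).1, (Finset.mem_filter.mp hc).2⟩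

/-- the per-`(σ, A)` term identity -/
lemma key_term {V : Finset (Vtx d)} {q : ℕ} (β : ℝ) {A : Finset (Sym2 {x // x ∈ V})}
    {S : Finset {x // x ∈ V}} (hS : S ⊆ isoVerts A) (f : Conf V q → ℝ) (σ : Conf V q) :
    ∑ σ' : Conf V q, f σ * ((if A ⊆ monoEdges σ then wgt β σ A else 0) *
        (if agr S σ σ' then ((q : ℝ) ^ S.card)⁻¹ else 0)) * f σ' * potts q β V σ
      = ∑ σ' : Conf V q, (∑ τ : Conf V q, pottsWeight q β τ)⁻¹ *
          ((Real.exp β - 1) ^ A.card *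
            (gA f A σ * (if agr S σ σ' then ((q : ℝ) ^ S.card)⁻¹ else 0) * gA f A σ')) := by
  refine Finset.sum_congr rfl fun σ' _ => ?_
  by_cases hA : A ⊆ monoEdges σ
  · rw [if_pos hA]
    have hgσ : gA f A σ = f σ := if_pos hA
    by_cases hag : agr S σ σ'
    · have hgσ' : gA f A σ' = f σ' := if_pos (mono_subset_agr hS hag hA)
      have hnu := nu_eq β hA
      rw [if_pos hag, hgσ, hgσ']
      calc f σ * (wgt β σ A * ((q : ℝ) ^ S.card)⁻¹) * f σ' * potts q β V σ
          = (potts q β V σ * wgt β σ A) * (f σ * ((q : ℝ) ^ S.card)⁻¹ * f σ') := by ring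
        _ = ((∑ τ : Conf V q, pottsWeight q β τ)⁻¹ * (Real.exp β - 1) ^ A.card) *
              (f σ * ((q : ℝ) ^ S.card)⁻¹ * f σ') := by rw [← hnu]; rfl
        _ = (∑ τ : Conf V q, pottsWeight q β τ)⁻¹ * ((Real.exp β - 1) ^ A.card *
              (f σ * ((q : ℝ) ^ S.card)⁻¹ * f σ')) := by ring
    · rw [if_neg hag]
      ring
  · rw [if_neg hA]
    have hgσ : gA f A σ = 0 := if_neg hA
    rw [hgσ]
    ring

/-- the common pipeline for both dynamics -/
lemma Qpipe {V : Finset (Vtx d)} {q : ℕ} (β : ℝ) (f : Conf V q → ℝ)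
    (S : Finset (Sym2 {x // x ∈ V}) → Finset {x // x ∈ V})
    (hS : ∀ A, S A ⊆ isoVerts A) :
    (∑ σ : Conf V q, ∑ σ' : Conf V q, f σ * (∑ A ∈ (monoEdges σ).powerset,
        wgt β σ A * (if agr (S A) σ σ' then ((q : ℝ) ^ (S A).card)⁻¹ else 0)) * f σ' *
          potts q β V σ)
      = (∑ τ : Conf V q, pottsWeight q β τ)⁻¹ *
          ∑ A : Finset (Sym2 {x // x ∈ V}), (Real.exp β - 1) ^ A.card * Bform (S A) (gA f A) := by
  classical
  calc (∑ σ : Conf V q, ∑ σ' : Conf V q, f σ * (∑ A ∈ (monoEdges σ).powerset,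
        wgt β σ A * (if agr (S A) σ σ' then ((q : ℝ) ^ (S A).card)⁻¹ else 0)) * f σ' *
          potts q β V σ)
      = ∑ σ : Conf V q, ∑ A ∈ (monoEdges σ).powerset, ∑ σ' : Conf V q,
          f σ * (wgt β σ A * (if agr (S A) σ σ' then ((q : ℝ) ^ (S A).card)⁻¹ else 0)) *
            f σ' * potts q β V σ := by
        refine Finset.sum_congr rfl fun σ _ => ?_
        rw [← Finset.sum_comm]
        refine Finset.sum_congr rfl fun σ' _ => ?_
        rw [Finset.mul_sum, Finset.sum_mul, Finset.sum_mul]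
    _ = ∑ σ : Conf V q, ∑ A : Finset (Sym2 {x // x ∈ V}), ∑ σ' : Conf V q,
          f σ * ((if A ⊆ monoEdges σ then wgt β σ A else 0) *
            (if agr (S A) σ σ' then ((q : ℝ) ^ (S A).card)⁻¹ else 0)) * f σ' *
              potts q β V σ := by
        refine Finset.sum_congr rfl fun σ _ => ?_
        rw [Finset.sum_congr rfl (fun A hA => ?_)]
        · refine Finset.sum_subset (Finset.subset_univ _) fun A _ hA => ?_
          refine Finset.sum_eq_zero fun σ' _ => ?_
          rw [if_neg (fun h => hA (Finset.mem_powerset.mpr h))]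
          ring
        · refine Finset.sum_congr rfl fun σ' _ => ?_
          rw [if_pos (Finset.mem_powerset.mp hA)]
    _ = ∑ A : Finset (Sym2 {x // x ∈ V}), ∑ σ : Conf V q, ∑ σ' : Conf V q,
          f σ * ((if A ⊆ monoEdges σ then wgt β σ A else 0) *
            (if agr (S A) σ σ' then ((q : ℝ) ^ (S A).card)⁻¹ else 0)) * f σ' *
              potts q β V σ := Finset.sum_comm
    _ = ∑ A : Finset (Sym2 {x // x ∈ V}), ∑ σ : Conf V q, ∑ σ' : Conf V q,
          (∑ τ : Conf V q, pottsWeight q β τ)⁻¹ * ((Real.exp β - 1) ^ A.card *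
            (gA f A σ * (if agr (S A) σ σ' then ((q : ℝ) ^ (S A).card)⁻¹ else 0) *
              gA f A σ')) := by
        exact Finset.sum_congr rfl fun A _ => Finset.sum_congr rfl fun σ _ =>
          key_term β (hS A) f σ
    _ = (∑ τ : Conf V q, pottsWeight q β τ)⁻¹ *
          ∑ A : Finset (Sym2 {x // x ∈ V}), (Real.exp β - 1) ^ A.card *
            Bform (S A) (gA f A) := by
        rw [Finset.mul_sum]
        refine Finset.sum_congr rfl fun A _ => ?_
        rw [Bform, Finset.mul_sum, Finset.mul_sum]
        refine Finset.sum_congr rfl fun σ _ => ?_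
        rw [Finset.mul_sum, Finset.mul_sum]

lemma Qform_ISW {V : Finset (Vtx d)} {q : ℕ} (β : ℝ) (f : Conf V q → ℝ) :
    Qform (potts q β V) (ISWmat q β V) f
      = (∑ τ : Conf V q, pottsWeight q β τ)⁻¹ *
          ∑ A : Finset (Sym2 {x // x ∈ V}), (Real.exp β - 1) ^ A.card *
            Bform (isoVerts A) (gA f A) := by
  rw [Qform, ← Qpipe β f (fun A => isoVerts A) (fun A => Finset.Subset.refl _)]
  refine Finset.sum_congr rfl fun σ _ => Finset.sum_congr rfl fun σ' _ => ?_
  rw [ISWmat_apply]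

lemma Qform_ID {V : Finset (Vtx d)} {q L : ℕ} (β : ℝ) (f : Conf V q → ℝ) :
    Qform (potts q β V) (IDmat q β V L) f
      = (((L : ℝ) + 3) ^ d)⁻¹ * ∑ x : Fin d → Fin (L + 3),
          ((∑ τ : Conf V q, pottsWeight q β τ)⁻¹ *
            ∑ A : Finset (Sym2 {x // x ∈ V}), (Real.exp β - 1) ^ A.card *
              Bform (tileIso L A x) (gA f A)) := by
  calc Qform (potts q β V) (IDmat q β V L) f
      = ∑ σ : Conf V q, ∑ σ' : Conf V q, ∑ x : Fin d → Fin (L + 3),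
          (((L : ℝ) + 3) ^ d)⁻¹ * (f σ * (∑ A ∈ (monoEdges σ).powerset,
            wgt β σ A * (if agr (tileIso L A x) σ σ'
              then ((q : ℝ) ^ (tileIso L A x).card)⁻¹ else 0)) * f σ' * potts q β V σ) := by
        refine Finset.sum_congr rfl fun σ _ => Finset.sum_congr rfl fun σ' _ => ?_
        rw [IDmat_apply]
        simp only [Finset.mul_sum, Finset.sum_mul]
        refine Finset.sum_congr rfl fun x _ => Finset.sum_congr rfl fun A _ => by ring
    _ = ∑ σ : Conf V q, ∑ x : Fin d → Fin (L + 3), ∑ σ' : Conf V q,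
          (((L : ℝ) + 3) ^ d)⁻¹ * (f σ * (∑ A ∈ (monoEdges σ).powerset,
            wgt β σ A * (if agr (tileIso L A x) σ σ'
              then ((q : ℝ) ^ (tileIso L A x).card)⁻¹ else 0)) * f σ' * potts q β V σ) :=
        Finset.sum_congr rfl fun σ _ => Finset.sum_comm
    _ = ∑ x : Fin d → Fin (L + 3), ∑ σ : Conf V q, ∑ σ' : Conf V q,
          (((L : ℝ) + 3) ^ d)⁻¹ * (f σ * (∑ A ∈ (monoEdges σ).powerset,
            wgt β σ A * (if agr (tileIso L A x) σ σ'
              then ((q : ℝ) ^ (tileIso L A x).card)⁻¹ else 0)) * f σ' * potts q β V σ) :=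
        Finset.sum_comm
    _ = (((L : ℝ) + 3) ^ d)⁻¹ * ∑ x : Fin d → Fin (L + 3),
          (∑ σ : Conf V q, ∑ σ' : Conf V q, f σ * (∑ A ∈ (monoEdges σ).powerset,
            wgt β σ A * (if agr (tileIso L A x) σ σ'
              then ((q : ℝ) ^ (tileIso L A x).card)⁻¹ else 0)) * f σ' * potts q β V σ) := by
        rw [Finset.mul_sum]
        refine Finset.sum_congr rfl fun x _ => ?_
        rw [Finset.mul_sum]
        refine Finset.sum_congr rfl fun σ _ => ?_
        rw [Finset.mul_sum]
    _ = (((L : ℝ) + 3) ^ d)⁻¹ * ∑ x : Fin d → Fin (L + 3),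
          ((∑ τ : Conf V q, pottsWeight q β τ)⁻¹ *
            ∑ A : Finset (Sym2 {x // x ∈ V}), (Real.exp β - 1) ^ A.card *
              Bform (tileIso L A x) (gA f A)) := by
        congr 1
        exact Finset.sum_congr rfl fun x _ =>
          Qpipe β f (fun A => tileIso L A x) (fun A => Finset.filter_subset _ _)

lemma pottsWeight_pos {V : Finset (Vtx d)} {q : ℕ} (β : ℝ) (σ : Conf V q) :
    0 < pottsWeight q β σ := by
  rw [pottsWeight_eq]
  positivity

lemma Zpos {V : Finset (Vtx d)} {q : ℕ} (hq0 : 0 < q) (β : ℝ) :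
    0 < ∑ τ : Conf V q, pottsWeight q β τ := by
  haveI : Nonempty (Conf V q) := ⟨fun _ => ⟨0, hq0⟩⟩
  exact Finset.sum_pos (fun τ _ => pottsWeight_pos β τ) Finset.univ_nonempty

lemma potts_pos {V : Finset (Vtx d)} {q : ℕ} (hq0 : 0 < q) (β : ℝ) (σ : Conf V q) :
    0 < potts q β V σ :=
  div_pos (pottsWeight_pos β σ) (Zpos hq0 β)

lemma varMu_nonneg {Ω : Type*} [Fintype Ω] {μ : Ω → ℝ} (hμ : ∀ x, 0 ≤ μ x) (f : Ω → ℝ) :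
    0 ≤ varMu μ f :=
  Finset.sum_nonneg fun x _ => mul_nonneg (sq_nonneg _) (hμ x)

lemma sum_c0W {V : Finset (Vtx d)} {q : ℕ} (β : ℝ) (σ : Conf V q) :
    (∑ A : Finset (Sym2 {x // x ∈ V}), (∑ τ : Conf V q, pottsWeight q β τ)⁻¹ *
        (Real.exp β - 1) ^ A.card * (if A ⊆ monoEdges σ then (1 : ℝ) else 0))
      = potts q β V σ := by
  classical
  calc (∑ A : Finset (Sym2 {x // x ∈ V}), (∑ τ : Conf V q, pottsWeight q β τ)⁻¹ *
        (Real.exp β - 1) ^ A.card * (if A ⊆ monoEdges σ then (1 : ℝ) else 0))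
      = ∑ A : Finset (Sym2 {x // x ∈ V}), (if A ⊆ monoEdges σ then
          (∑ τ : Conf V q, pottsWeight q β τ)⁻¹ * (Real.exp β - 1) ^ A.card else 0) := by
        refine Finset.sum_congr rfl fun A _ => ?_
        by_cases h : A ⊆ monoEdges σ <;> simp [h]
    _ = ∑ A ∈ Finset.univ.filter (fun A => A ⊆ monoEdges σ),
          (∑ τ : Conf V q, pottsWeight q β τ)⁻¹ * (Real.exp β - 1) ^ A.card :=
        (Finset.sum_filter _ _).symm
    _ = ∑ A ∈ (monoEdges σ).powerset,
          (∑ τ : Conf V q, pottsWeight q β τ)⁻¹ * (Real.exp β - 1) ^ A.card := by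
        refine Finset.sum_congr ?_ fun _ _ => rfl
        ext A
        simp [Finset.mem_powerset]
    _ = ∑ A ∈ (monoEdges σ).powerset, potts q β V σ *
          ((1 - Real.exp (-β)) ^ A.card * Real.exp (-β) ^ ((monoEdges σ).card - A.card)) := by
        refine Finset.sum_congr rfl fun A hA => ?_
        rw [nu_eq β (Finset.mem_powerset.mp hA)]
    _ = potts q β V σ * ∑ A ∈ (monoEdges σ).powerset,
          (1 - Real.exp (-β)) ^ A.card * Real.exp (-β) ^ ((monoEdges σ).card - A.card) := by
        rw [Finset.mul_sum]
    _ = potts q β V σ := by rw [sum_w_one]; ring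

lemma QID_le_sq {V : Finset (Vtx d)} {q L : ℕ} (hq0 : 0 < q) {β : ℝ} (hβ : 0 < β)
    (f : Conf V q → ℝ) :
    Qform (potts q β V) (IDmat q β V L) f ≤ ∑ σ : Conf V q, f σ ^ 2 * potts q β V σ := by
  have hW : ∀ A : Finset (Sym2 {x // x ∈ V}), 0 ≤ (Real.exp β - 1) ^ A.card :=
    fun A => pow_nonneg (by linarith [Real.one_le_exp hβ.le]) _
  have hc0 : 0 ≤ (∑ τ : Conf V q, pottsWeight q β τ)⁻¹ := (inv_nonneg).mpr (Zpos hq0 β).le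
  have hgsq : ∀ (A : Finset (Sym2 {x // x ∈ V})) (σ : Conf V q),
      (gA f A σ) ^ 2 = (if A ⊆ monoEdges σ then (1 : ℝ) else 0) * f σ ^ 2 := by
    intro A σ
    by_cases h : A ⊆ monoEdges σ <;> simp [gA, h]
  have hinner : ∀ x : Fin d → Fin (L + 3),
      (∑ τ : Conf V q, pottsWeight q β τ)⁻¹ *
        ∑ A : Finset (Sym2 {x // x ∈ V}), (Real.exp β - 1) ^ A.card *
          Bform (tileIso L A x) (gA f A)
      ≤ ∑ σ : Conf V q, f σ ^ 2 * potts q β V σ := by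
    intro x
    have h1 : (∑ τ : Conf V q, pottsWeight q β τ)⁻¹ *
        ∑ A : Finset (Sym2 {x // x ∈ V}), (Real.exp β - 1) ^ A.card *
          Bform (tileIso L A x) (gA f A)
        ≤ (∑ τ : Conf V q, pottsWeight q β τ)⁻¹ *
          ∑ A : Finset (Sym2 {x // x ∈ V}), (Real.exp β - 1) ^ A.card *
            ∑ σ : Conf V q, (gA f A σ) ^ 2 := by
      refine mul_le_mul_of_nonneg_left (Finset.sum_le_sum fun A _ => ?_) hc0
      exact mul_le_mul_of_nonneg_left (Bform_le_sum_sq hq0 _ _) (hW A)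
    refine h1.trans (le_of_eq ?_)
    calc (∑ τ : Conf V q, pottsWeight q β τ)⁻¹ *
          ∑ A : Finset (Sym2 {x // x ∈ V}), (Real.exp β - 1) ^ A.card *
            ∑ σ : Conf V q, (gA f A σ) ^ 2
        = ∑ A : Finset (Sym2 {x // x ∈ V}), ∑ σ : Conf V q,
            (∑ τ : Conf V q, pottsWeight q β τ)⁻¹ * (Real.exp β - 1) ^ A.card *
              ((if A ⊆ monoEdges σ then (1 : ℝ) else 0) * f σ ^ 2) := by
          rw [Finset.mul_sum]
          refine Finset.sum_congr rfl fun A _ => ?_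
          rw [Finset.mul_sum, Finset.mul_sum]
          refine Finset.sum_congr rfl fun σ _ => ?_
          rw [hgsq A σ]
          ring
      _ = ∑ σ : Conf V q, (∑ A : Finset (Sym2 {x // x ∈ V}),
            (∑ τ : Conf V q, pottsWeight q β τ)⁻¹ * (Real.exp β - 1) ^ A.card *
              (if A ⊆ monoEdges σ then (1 : ℝ) else 0)) * f σ ^ 2 := by
          rw [Finset.sum_comm]
          refine Finset.sum_congr rfl fun σ _ => ?_
          rw [Finset.sum_mul]
          refine Finset.sum_congr rfl fun A _ => by ring
      _ = ∑ σ : Conf V q, f σ ^ 2 * potts q β V σ := by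
          refine Finset.sum_congr rfl fun σ _ => ?_
          rw [sum_c0W β σ]
          ring
  rw [Qform_ID]
  have hpos : (0 : ℝ) < ((L : ℝ) + 3) ^ d := by positivity
  have hcard : ∑ x : Fin d → Fin (L + 3),
      (∑ σ : Conf V q, f σ ^ 2 * potts q β V σ) =
      ((L : ℝ) + 3) ^ d * ∑ σ : Conf V q, f σ ^ 2 * potts q β V σ := by
    rw [Finset.sum_const, Finset.card_univ, nsmul_eq_mul]
    congr 1
    rw [Fintype.card_fun]
    push_cast
    simp
  calc (((L : ℝ) + 3) ^ d)⁻¹ * ∑ x : Fin d → Fin (L + 3),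
        ((∑ τ : Conf V q, pottsWeight q β τ)⁻¹ *
          ∑ A : Finset (Sym2 {x // x ∈ V}), (Real.exp β - 1) ^ A.card *
            Bform (tileIso L A x) (gA f A))
      ≤ (((L : ℝ) + 3) ^ d)⁻¹ * ∑ x : Fin d → Fin (L + 3),
          (∑ σ : Conf V q, f σ ^ 2 * potts q β V σ) :=
        mul_le_mul_of_nonneg_left (Finset.sum_le_sum fun x _ => hinner x)
          (inv_nonneg.mpr hpos.le)
    _ = ∑ σ : Conf V q, f σ ^ 2 * potts q β V σ := by
        rw [hcard, ← mul_assoc, inv_mul_cancel₀ hpos.ne', one_mul]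

lemma QSW_le_QID {V : Finset (Vtx d)} {q L : ℕ} (hq0 : 0 < q) {β : ℝ} (hβ : 0 < β)
    (f : Conf V q → ℝ) :
    Qform (potts q β V) (ISWmat q β V) f ≤ Qform (potts q β V) (IDmat q β V L) f := by
  have hW : ∀ A : Finset (Sym2 {x // x ∈ V}), 0 ≤ (Real.exp β - 1) ^ A.card :=
    fun A => pow_nonneg (by linarith [Real.one_le_exp hβ.le]) _
  have hc0 : 0 ≤ (∑ τ : Conf V q, pottsWeight q β τ)⁻¹ := (inv_nonneg).mpr (Zpos hq0 β).le
  rw [Qform_ISW, Qform_ID]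
  have hpos : (0 : ℝ) < ((L : ℝ) + 3) ^ d := by positivity
  have hterm : ∀ x : Fin d → Fin (L + 3),
      (∑ τ : Conf V q, pottsWeight q β τ)⁻¹ *
        ∑ A : Finset (Sym2 {x // x ∈ V}), (Real.exp β - 1) ^ A.card *
          Bform (isoVerts A) (gA f A)
      ≤ (∑ τ : Conf V q, pottsWeight q β τ)⁻¹ *
        ∑ A : Finset (Sym2 {x // x ∈ V}), (Real.exp β - 1) ^ A.card *
          Bform (tileIso L A x) (gA f A) := by
    intro x
    refine mul_le_mul_of_nonneg_left (Finset.sum_le_sum fun A _ => ?_) hc0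
    exact mul_le_mul_of_nonneg_left
      (Bform_mono hq0 (Finset.filter_subset _ _) _) (hW A)
  have hcard : ∑ x : Fin d → Fin (L + 3),
      ((∑ τ : Conf V q, pottsWeight q β τ)⁻¹ *
        ∑ A : Finset (Sym2 {x // x ∈ V}), (Real.exp β - 1) ^ A.card *
          Bform (isoVerts A) (gA f A))
      = ((L : ℝ) + 3) ^ d * ((∑ τ : Conf V q, pottsWeight q β τ)⁻¹ *
          ∑ A : Finset (Sym2 {x // x ∈ V}), (Real.exp β - 1) ^ A.card *
            Bform (isoVerts A) (gA f A)) := by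
    rw [Finset.sum_const, Finset.card_univ, nsmul_eq_mul]
    congr 1
    rw [Fintype.card_fun]
    push_cast
    simp
  calc (∑ τ : Conf V q, pottsWeight q β τ)⁻¹ *
        ∑ A : Finset (Sym2 {x // x ∈ V}), (Real.exp β - 1) ^ A.card *
          Bform (isoVerts A) (gA f A)
      = (((L : ℝ) + 3) ^ d)⁻¹ * ∑ x : Fin d → Fin (L + 3),
          ((∑ τ : Conf V q, pottsWeight q β τ)⁻¹ *
            ∑ A : Finset (Sym2 {x // x ∈ V}), (Real.exp β - 1) ^ A.card *
              Bform (isoVerts A) (gA f A)) := by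
        rw [hcard, ← mul_assoc, inv_mul_cancel₀ hpos.ne', one_mul]
    _ ≤ (((L : ℝ) + 3) ^ d)⁻¹ * ∑ x : Fin d → Fin (L + 3),
          ((∑ τ : Conf V q, pottsWeight q β τ)⁻¹ *
            ∑ A : Finset (Sym2 {x // x ∈ V}), (Real.exp β - 1) ^ A.card *
              Bform (tileIso L A x) (gA f A)) :=
        mul_le_mul_of_nonneg_left (Finset.sum_le_sum fun x _ => hterm x)
          (inv_nonneg.mpr hpos.le)

end Potts

/-- For the ferromagnetic `q`-state Potts model on a cube of `ℤ^d`, the isolated-vertices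
dynamics has spectral gap at least that of the isolated-vertices tiled dynamics:
`λ(I_SW) ≥ λ(I_D)`. -/
theorem statement9 (d q : ℕ) (β : ℝ) (hq : 2 ≤ q) (hβ : 0 < β)
    (V : Finset (Vtx d)) (hV : IsCube V) (L : ℕ) (hL : Odd L) :
    gapD (potts q β V) (IDmat q β V L) ≤ gapD (potts q β V) (ISWmat q β V) := by
  classical
  have hq0 : 0 < q := lt_of_lt_of_le (by norm_num) hq
  have hμnn : ∀ σ : Conf V q, 0 ≤ potts q β V σ := fun σ => (potts_pos hq0 β σ).le
  by_cases hex : ∃ f : Conf V q → ℝ, varMu (potts q β V) f ≠ 0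
  · obtain ⟨f0, hf0⟩ := hex
    have hdle : ∀ f : Conf V q → ℝ, dirichletForm (potts q β V) (IDmat q β V L) f
        ≤ dirichletForm (potts q β V) (ISWmat q β V) f := by
      intro f
      rw [dirichletForm_eq, dirichletForm_eq]
      have := QSW_le_QID (L := L) hq0 hβ f
      linarith
    have hdnn : ∀ f : Conf V q → ℝ, 0 ≤ dirichletForm (potts q β V) (IDmat q β V L) f := by
      intro f
      rw [dirichletForm_eq]
      have := QID_le_sq (L := L) hq0 hβ f
      linarith
    have hBdd : BddBelow {r : ℝ | ∃ f : Conf V q → ℝ, varMu (potts q β V) f ≠ 0 ∧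
        r = dirichletForm (potts q β V) (IDmat q β V L) f / varMu (potts q β V) f} := by
      refine ⟨0, ?_⟩
      rintro r ⟨f, hf, rfl⟩
      exact div_nonneg (hdnn f) (varMu_nonneg hμnn f)
    rw [gapD, gapD]
    refine le_csInf ⟨_, ⟨f0, hf0, rfl⟩⟩ ?_
    rintro b ⟨f, hf, rfl⟩
    refine le_trans (csInf_le hBdd ⟨f, hf, rfl⟩) ?_
    have hvar : 0 < varMu (potts q β V) f := (varMu_nonneg hμnn f).lt_of_ne (Ne.symm hf)
    exact (div_le_div_iff_of_pos_right hvar).mpr (hdle f)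
  · have h1 : {r : ℝ | ∃ f : Conf V q → ℝ, varMu (potts q β V) f ≠ 0 ∧
        r = dirichletForm (potts q β V) (IDmat q β V L) f / varMu (potts q β V) f} = ∅ := by
      ext r
      simp only [Set.mem_setOf_eq, Set.mem_empty_iff_false, iff_false]
      rintro ⟨f, hf, -⟩
      exact hex ⟨f, hf⟩
    have h2 : {r : ℝ | ∃ f : Conf V q → ℝ, varMu (potts q β V) f ≠ 0 ∧
        r = dirichletForm (potts q β V) (ISWmat q β V) f / varMu (potts q β V) f} = ∅ := by
      ext r
      simp only [Set.mem_setOf_eq, Set.mem_empty_iff_false, iff_false]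
      rintro ⟨f, hf, -⟩
      exact hex ⟨f, hf⟩
    rw [gapD, gapD, h1, h2]
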